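/- For n ≥ 5, r ≥ 4 with n ≥ r−1, and S := {{1,2},{1,3},…,{1,n},{2,3},{4,5}}, the (r−2,…,r−2)-disjoint r-colorability defect satisfies cd^r_{r-2}(S) = 3r − 10. -/
import Mathlib


/-- The family `S = {{1,2},{1,3},…,{1,n},{2,3},{4,5}}` of 2-subsets of `[n]`. -/
def Sfam (n : ℕ) : Finset (Finset ℕ) :=
  ((Finset.Icc 2 n).image fun j => ({1, j} : Finset ℕ)) ∪
    {({2, 3} : Finset ℕ), ({4, 5} : Finset ℕ)}

/-- The `(s,…,s)`-disjoint `r`-colorability defect of a family `S` of subsets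
of `[n] = {1,…,n}`: `n·s` minus the maximal total size of `r` subsets of `[n]`,
each element lying in at most `s` of them, none containing a member of `S`. -/
noncomputable def cdN (n r s : ℕ) (S : Finset (Finset ℕ)) : ℕ :=
  n * s - sSup {m | ∃ R : Multiset (Finset ℕ),
    Multiset.card R = r ∧
    (∀ A ∈ R, A ⊆ Finset.Icc 1 n) ∧
    (∀ i : ℕ, R.countP (fun A => i ∈ A) ≤ s) ∧
    (∀ A ∈ R, ∀ T ∈ S, ¬ T ⊆ A) ∧
    m = (R.map Finset.card).sum}

lemma countP_replicate' (p : Finset ℕ → Prop) [DecidablePred p] (k : ℕ) (a : Finset ℕ) :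
    Multiset.countP p (Multiset.replicate k a) = if p a then k else 0 := by
  induction k with
  | zero => simp
  | succ k ih => rw [Multiset.replicate_succ, Multiset.countP_cons, ih]; split_ifs <;> omega

lemma swap_sum (s : Finset ℕ) (R : Multiset (Finset ℕ)) :
    (R.map (fun A => ∑ i ∈ s, if i ∈ A then 1 else 0)).sum
      = ∑ i ∈ s, R.countP (fun A => i ∈ A) := by
  induction R using Multiset.induction with
  | empty => simp
  | cons A R ih =>
      simp only [Multiset.map_cons, Multiset.sum_cons, ih, Multiset.countP_cons,
        Finset.sum_add_distrib]
      omega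

lemma mem_Sfam_pair (n j : ℕ) (h2 : 2 ≤ j) (hjn : j ≤ n) : ({1, j} : Finset ℕ) ∈ Sfam n := by
  apply Finset.mem_union_left
  exact Finset.mem_image.mpr ⟨j, Finset.mem_Icc.mpr ⟨h2, hjn⟩, rfl⟩

lemma mem_Sfam_23 (n : ℕ) : ({2, 3} : Finset ℕ) ∈ Sfam n := by
  apply Finset.mem_union_right; simp

lemma mem_Sfam_45 (n : ℕ) : ({4, 5} : Finset ℕ) ∈ Sfam n := by
  apply Finset.mem_union_right; simp

lemma per_set_bound (n : ℕ) (hn : 5 ≤ n) (A : Finset ℕ)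
    (hS : ∀ T ∈ Sfam n, ¬ T ⊆ A) :
    (∑ i ∈ Finset.Icc 1 5, if i ∈ A then 1 else 0) ≤ 2 := by
  have hpair : ∀ j, 2 ≤ j → j ≤ n → ¬ (1 ∈ A ∧ j ∈ A) := by
    intro j h2 hjn hc
    exact hS _ (mem_Sfam_pair n j h2 hjn)
      (by simp [Finset.insert_subset_iff, hc.1, hc.2])
  have h23 : ¬ (2 ∈ A ∧ 3 ∈ A) := fun hc =>
    hS _ (mem_Sfam_23 n) (by simp [Finset.insert_subset_iff, hc.1, hc.2])
  have h45 : ¬ (4 ∈ A ∧ 5 ∈ A) := fun hc =>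
    hS _ (mem_Sfam_45 n) (by simp [Finset.insert_subset_iff, hc.1, hc.2])
  have h2 := hpair 2 (by omega) (by omega)
  have h3 := hpair 3 (by omega) (by omega)
  have h4 := hpair 4 (by omega) (by omega)
  have h5 := hpair 5 (by omega) (by omega)
  have hIcc : Finset.Icc 1 5 = ({1, 2, 3, 4, 5} : Finset ℕ) := by decide
  rw [hIcc]
  rw [Finset.sum_insert (by decide), Finset.sum_insert (by decide),
    Finset.sum_insert (by decide), Finset.sum_insert (by decide), Finset.sum_singleton]
  by_cases m1 : 1 ∈ A <;> by_cases m2 : 2 ∈ A <;> by_cases m3 : 3 ∈ A <;>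
    by_cases m4 : 4 ∈ A <;> by_cases m5 : 5 ∈ A <;>
    simp_all <;> omega

/-- For `n ≥ 5`, `r ≥ 4`, `n ≥ r-1` and `S = {{1,2},…,{1,n},{2,3},{4,5}}`,
the `(r-2,…,r-2)`-disjoint `r`-colorability defect is `cd^r_{r-2}(S) = 3r - 10`. -/
theorem stmt12 (n r : ℕ) (hn : 5 ≤ n) (hr : 4 ≤ r) (hnr : r - 1 ≤ n) :
    cdN n r (r - 2) (Sfam n) = 3 * r - 10 := by
  classical
  set M : Set ℕ := {m | ∃ R : Multiset (Finset ℕ),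
    Multiset.card R = r ∧
    (∀ A ∈ R, A ⊆ Finset.Icc 1 n) ∧
    (∀ i : ℕ, R.countP (fun A => i ∈ A) ≤ r - 2) ∧
    (∀ A ∈ R, ∀ T ∈ Sfam n, ¬ T ⊆ A) ∧
    m = (R.map Finset.card).sum} with hM
  have key : sSup M = 2 * r + (n - 5) * (r - 2) := by
    apply IsGreatest.csSup_eq
    constructor
    · -- membership: the construction
      refine ⟨Multiset.replicate 2 ({3, 5} : Finset ℕ) +
        Multiset.replicate (r - 2) ((Finset.Icc 2 n) \ {3, 5}), ?_, ?_, ?_, ?_, ?_⟩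
      · simp; omega
      · intro A hA
        rcases Multiset.mem_add.mp hA with h | h <;>
          rw [Multiset.eq_of_mem_replicate h]
        · intro x hx
          simp only [Finset.mem_insert, Finset.mem_singleton] at hx
          rcases hx with rfl | rfl <;> simp [Finset.mem_Icc] <;> omega
        · intro x hx
          rw [Finset.mem_sdiff, Finset.mem_Icc] at hx
          rw [Finset.mem_Icc]; omega
      · intro i
        rw [Multiset.countP_add, countP_replicate', countP_replicate']
        by_cases hi : i ∈ ({3, 5} : Finset ℕ)
        · have : i ∉ (Finset.Icc 2 n) \ {3, 5} := by simp [Finset.mem_sdiff, hi]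
          simp [hi, this]; omega
        · simp [hi]; split_ifs <;> omega
      · intro A hA T hT
        have hT' : (∃ j, 2 ≤ j ∧ j ≤ n ∧ T = {1, j}) ∨ T = {2, 3} ∨ T = {4, 5} := by
          rcases Finset.mem_union.mp hT with h | h
          · obtain ⟨j, hj, rfl⟩ := Finset.mem_image.mp h
            rw [Finset.mem_Icc] at hj
            exact Or.inl ⟨j, hj.1, hj.2, rfl⟩
          · simp only [Finset.mem_insert, Finset.mem_singleton] at h
            exact Or.inr h
        rcases Multiset.mem_add.mp hA with h | h <;>
          rw [Multiset.eq_of_mem_replicate h] <;> clear hA h <;> intro hsub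
        · rcases hT' with ⟨j, _, _, rfl⟩ | rfl | rfl
          · have := hsub (by simp : (1 : ℕ) ∈ ({1, j} : Finset ℕ))
            simp at this
          · have := hsub (by simp : (2 : ℕ) ∈ ({2, 3} : Finset ℕ))
            simp at this
          · have := hsub (by simp : (4 : ℕ) ∈ ({4, 5} : Finset ℕ))
            simp at this
        · rcases hT' with ⟨j, _, _, rfl⟩ | rfl | rfl
          · have := hsub (by simp : (1 : ℕ) ∈ ({1, j} : Finset ℕ))
            rw [Finset.mem_sdiff, Finset.mem_Icc] at this; omega
          · have := hsub (by simp : (3 : ℕ) ∈ ({2, 3} : Finset ℕ))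
            rw [Finset.mem_sdiff] at this; simp at this
          · have := hsub (by simp : (5 : ℕ) ∈ ({4, 5} : Finset ℕ))
            rw [Finset.mem_sdiff] at this; simp at this
      · have hsub35 : ({3, 5} : Finset ℕ) ⊆ Finset.Icc 2 n := by
          intro x hx
          simp only [Finset.mem_insert, Finset.mem_singleton] at hx
          rcases hx with rfl | rfl <;> rw [Finset.mem_Icc] <;> omega
        have hc35 : ({3, 5} : Finset ℕ).card = 2 := by decide
        have hcB : ((Finset.Icc 2 n) \ {3, 5}).card = n - 3 := by
          rw [Finset.card_sdiff_of_subset hsub35, hc35, Nat.card_Icc]; omega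
        rw [Multiset.map_add, Multiset.map_replicate, Multiset.map_replicate,
          Multiset.sum_add, Multiset.sum_replicate, Multiset.sum_replicate, hc35, hcB]
        simp only [smul_eq_mul]
        have h1 : n - 5 + 2 = n - 3 := by omega
        have h2 : (n - 5) * (r - 2) + 2 * (r - 2) = (n - 3) * (r - 2) := by
          rw [← Nat.add_mul, h1]
        have h3 : (r - 2) * (n - 3) = (n - 3) * (r - 2) := Nat.mul_comm _ _
        omega
    · -- upper bound
      rintro m ⟨R, hcard, hsubR, hcount, hS, rfl⟩
      have hdisj : Disjoint (Finset.Icc 1 5) (Finset.Icc 6 n) := by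
        rw [Finset.disjoint_left]
        intro a ha hb
        rw [Finset.mem_Icc] at ha hb; omega
      have hsplit : Finset.Icc 1 n = Finset.Icc 1 5 ∪ Finset.Icc 6 n := by
        ext x; simp only [Finset.mem_Icc, Finset.mem_union]; omega
      have hcardA : ∀ A ∈ R, A.card =
          (∑ i ∈ Finset.Icc 1 5, if i ∈ A then 1 else 0) +
          (∑ i ∈ Finset.Icc 6 n, if i ∈ A then 1 else 0) := by
        intro A hA
        have h1 : (Finset.Icc 1 n).filter (· ∈ A) = A := by
          rw [Finset.filter_mem_eq_inter, Finset.inter_eq_right]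
          exact hsubR A hA
        calc A.card = ((Finset.Icc 1 n).filter (· ∈ A)).card := by rw [h1]
          _ = ∑ i ∈ Finset.Icc 1 n, if i ∈ A then 1 else 0 := Finset.card_filter _ _
          _ = _ := by rw [hsplit, Finset.sum_union hdisj]
      have hmap : R.map Finset.card = R.map (fun A =>
          (∑ i ∈ Finset.Icc 1 5, if i ∈ A then 1 else 0) +
          (∑ i ∈ Finset.Icc 6 n, if i ∈ A then 1 else 0)) :=
        Multiset.map_congr rfl hcardA
      rw [hmap, Multiset.sum_map_add]
      have hb1 : (R.map (fun A => ∑ i ∈ Finset.Icc 1 5, if i ∈ A then 1 else 0)).sum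
          ≤ 2 * r := by
        calc (R.map (fun A => ∑ i ∈ Finset.Icc 1 5, if i ∈ A then 1 else 0)).sum
            ≤ (R.map (fun _ => 2)).sum :=
              Multiset.sum_map_le_sum_map _ _ (fun A hA => per_set_bound n hn A (hS A hA))
          _ = 2 * r := by
              rw [Multiset.map_const', Multiset.sum_replicate, hcard, smul_eq_mul]; omega
      have hb2 : (R.map (fun A => ∑ i ∈ Finset.Icc 6 n, if i ∈ A then 1 else 0)).sum
          ≤ (n - 5) * (r - 2) := by
        rw [swap_sum]
        calc ∑ i ∈ Finset.Icc 6 n, R.countP (fun A => i ∈ A)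
            ≤ ∑ _i ∈ Finset.Icc 6 n, (r - 2) := Finset.sum_le_sum (fun i _ => hcount i)
          _ = (n - 5) * (r - 2) := by
              rw [Finset.sum_const, Nat.card_Icc, smul_eq_mul,
                show n + 1 - 6 = n - 5 from by omega]
      omega
  rw [cdN, ← hM, key]
  have h5 : n - 5 + 5 = n := by omega
  have : (n - 5) * (r - 2) + 5 * (r - 2) = n * (r - 2) := by
    rw [← Nat.add_mul, h5]
  omega
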